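/- Let S be a smooth degree-6 K3 surface in ℙ⁴ with Pic(S) = ℤH ⊕ ℤC, where H is the hyperplane class and C is a smooth irreducible curve of genus g and degree d. If S contains an integral rational cubic curve (effective divisor Γ with H·Γ = 3 and Γ² = −2), then d ≡ 3 (mod 6) and g = (d² − 9)/12. -/
import Mathlib


/-- The intersection form on `Pic S = ℤH ⊕ ℤC` of a smooth sextic K3 surface
containing a smooth irreducible curve `C` of genus `g` and degree `d`:
a class `aH + bC` is encoded as the pair `(a, b)`, and
`H² = 6`, `H·C = d`, `C² = 2g − 2`. -/
def interForm (d g : ℤ) (p q : ℤ × ℤ) : ℤ :=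
  6 * p.1 * q.1 + d * (p.1 * q.2 + p.2 * q.1) + (2 * g - 2) * p.2 * q.2

/-- with `Pic S = ℤH ⊕ ℤC` as above (`H = (1,0)`), if `S`
contains an integral rational cubic — an effective class `Γ` with
`H·Γ = 3` and `Γ² = −2` — then `d ≡ 3 (mod 6)` and `g = (d² − 9)/12`. -/
theorem rational_cubic_in_sextic_K3
    (d g : ℤ) (hd : 1 ≤ d) (hg : 0 ≤ g)
    (Eff : Set (ℤ × ℤ))
    (hΓ : ∃ Γ : ℤ × ℤ, Γ ∈ Eff ∧ interForm d g (1, 0) Γ = 3 ∧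
      interForm d g Γ Γ = -2) :
    d % 6 = 3 ∧ 12 * g = d ^ 2 - 9 := by
  obtain ⟨⟨a, b⟩, -, h1, h2⟩ := hΓ
  simp only [interForm] at h1 h2
  set k : ℤ := d ^ 2 - 12 * g + 12 with hk
  have key : b ^ 2 * k = 21 := by
    rw [hk]; linear_combination (6 * a + d * b + 3) * h1 - 6 * h2
  have hdvd : b ^ 2 ∣ 21 := ⟨k, key.symm⟩
  have h21 : b ^ 2 ≤ 21 := Int.le_of_dvd (by norm_num) hdvd
  have hbb : -4 ≤ b ∧ b ≤ 4 := ⟨by nlinarith, by nlinarith⟩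
  obtain ⟨hb1, hb2⟩ := hbb
  have hb : b = 1 ∨ b = -1 := by
    interval_cases b <;> omega
  have hk21 : k = 21 := by rcases hb with h | h <;> simp [h] at key <;> omega
  have hg12 : 12 * g = d ^ 2 - 9 := by omega
  refine ⟨?_, hg12⟩
  have hdb : 6 * a + d * b = 3 := by linarith [h1]
  rcases hb with h | h <;> subst h <;> omega
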